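/- Let G be a finite directed graph and let T^s and T^g be two directed spanning trees of G. Then there exists a reconfiguration sequence ⟨T^s = T_0, T_1, …, T_ℓ = T^g⟩ in which every T_i is a directed spanning tree of G, |A(T_i) \ A(T_{i+1})| = |A(T_{i+1}) \ A(T_i)| = 1 for all 0 ≤ i < ℓ, and the length ℓ equals |A(T^s) \ A(T^g)| (which is the minimum possible length). -/

import Mathlib

/-- The vertex set of a set of arcs. -/
def arcVerts {V : Type*} [DecidableEq V] (T : Finset (V × V)) : Finset V :=
  T.image Prod.fst ∪ T.image Prod.snd

/-- The in-degree of a vertex `v` in a set of arcs `T`. -/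
def inDeg {V : Type*} [DecidableEq V] (T : Finset (V × V)) (v : V) : ℕ :=
  (T.filter fun e => e.2 = v).card

/-- The step relation of a set of arcs: `arcRel T a b` iff `(a, b)` is an arc of `T`. -/
def arcRel {V : Type*} (T : Finset (V × V)) : V → V → Prop := fun a b => (a, b) ∈ T

/-- `T` is (the arc set of) a directed tree rooted at `r`: the root has in-degree `0`,
every other vertex has in-degree exactly `1`, and every vertex is reachable from `r`. -/
def IsDirTree {V : Type*} [DecidableEq V] (T : Finset (V × V)) (r : V) : Prop :=
  inDeg T r = 0 ∧ (∀ v ∈ arcVerts T, v ≠ r → inDeg T v = 1) ∧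
    ∀ v ∈ arcVerts T, Relation.ReflTransGen (arcRel T) r v

/-- `T` is a directed spanning tree of the digraph on vertex type `V` with arc set `A`. -/
def IsDirSpanningTree {V : Type*} [DecidableEq V] (A T : Finset (V × V)) : Prop :=
  T ⊆ A ∧ ∃ r, IsDirTree T r ∧ ∀ v, v ≠ r → v ∈ arcVerts T

namespace DirTreeAux

variable {V : Type*} [DecidableEq V]

lemma mem_arcVerts_fst {T : Finset (V × V)} {a b : V} (h : (a, b) ∈ T) : a ∈ arcVerts T :=
  Finset.mem_union_left _ (Finset.mem_image_of_mem Prod.fst h)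

lemma mem_arcVerts_snd {T : Finset (V × V)} {a b : V} (h : (a, b) ∈ T) : b ∈ arcVerts T :=
  Finset.mem_union_right _ (Finset.mem_image_of_mem Prod.snd h)

lemma arcVerts_cases {T : Finset (V × V)} {x : V} (h : x ∈ arcVerts T) :
    ∃ g ∈ T, x = g.1 ∨ x = g.2 := by
  rcases Finset.mem_union.mp h with h | h
  · obtain ⟨g, hg, rfl⟩ := Finset.mem_image.mp h
    exact ⟨g, hg, Or.inl rfl⟩
  · obtain ⟨g, hg, rfl⟩ := Finset.mem_image.mp h
    exact ⟨g, hg, Or.inr rfl⟩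

lemma no_arc_into {T : Finset (V × V)} {r : V} (h0 : inDeg T r = 0) {a : V}
    (ha : (a, r) ∈ T) : False := by
  have hm : (a, r) ∈ T.filter fun e => e.2 = r := Finset.mem_filter.mpr ⟨ha, rfl⟩
  rw [Finset.card_eq_zero.mp h0] at hm
  exact absurd hm (Finset.notMem_empty _)

lemma inArc_unique {T : Finset (V × V)} {r : V} (h : IsDirTree T r) {a b v : V}
    (ha : (a, v) ∈ T) (hb : (b, v) ∈ T) : a = b := by
  by_cases hv : v = r
  · subst hv; exact (no_arc_into h.1 ha).elim
  · have h1 : inDeg T v = 1 := h.2.1 v (mem_arcVerts_snd ha) hv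
    obtain ⟨x, hx⟩ := Finset.card_eq_one.mp h1
    have ha' : (a, v) ∈ ({x} : Finset (V × V)) := hx ▸ Finset.mem_filter.mpr ⟨ha, rfl⟩
    have hb' : (b, v) ∈ ({x} : Finset (V × V)) := hx ▸ Finset.mem_filter.mpr ⟨hb, rfl⟩
    have := (Finset.mem_singleton.mp ha').trans (Finset.mem_singleton.mp hb').symm
    exact congrArg Prod.fst this

lemma exists_inArc {T : Finset (V × V)} {r : V} (h : IsDirTree T r) {v : V}
    (hv : v ∈ arcVerts T) (hvr : v ≠ r) : ∃ a, (a, v) ∈ T := by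
  have h1 : inDeg T v = 1 := h.2.1 v hv hvr
  have hpos : (T.filter fun e => e.2 = v).Nonempty :=
    Finset.card_pos.mp (by rw [inDeg] at h1; omega)
  obtain ⟨⟨g1, g2⟩, hg⟩ := hpos
  obtain ⟨hgT, hg2⟩ := Finset.mem_filter.mp hg
  simp only at hg2
  subst hg2
  exact ⟨g1, hgT⟩

lemma acyc {T : Finset (V × V)} {r : V} (h : IsDirTree T r) :
    ∀ v, Relation.ReflTransGen (arcRel T) r v → ¬ Relation.TransGen (arcRel T) v v := by
  intro v hv
  induction hv with
  | refl =>
    intro hc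
    obtain ⟨c, -, hc2⟩ := Relation.TransGen.tail'_iff.mp hc
    exact no_arc_into h.1 hc2
  | @tail w x hrw hwx ih =>
    intro hc
    by_cases hxr : x = r
    · subst hxr; exact no_arc_into h.1 hwx
    · obtain ⟨c, hxc, hcx⟩ := Relation.TransGen.tail'_iff.mp hc
      have hcw : c = w := inArc_unique h hcx hwx
      subst hcw
      exact ih (Relation.TransGen.head' hwx hxc)

lemma tree_card [Fintype V] {T : Finset (V × V)} {r : V} (ht : IsDirTree T r)
    (hs : ∀ v, v ≠ r → v ∈ arcVerts T) : T.card = Fintype.card V - 1 := by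
  have hbij : T.card = (Finset.univ.erase r).card := by
    apply Finset.card_bij (fun a _ => a.2)
    · intro a ha
      refine Finset.mem_erase.mpr ⟨?_, Finset.mem_univ _⟩
      intro h2
      exact no_arc_into ht.1 (show (a.1, r) ∈ T from h2 ▸ ha)
    · rintro ⟨a1, a2⟩ ha ⟨b1, b2⟩ hb hab
      simp only at hab
      subst hab
      obtain rfl := inArc_unique ht ha hb
      rfl
    · intro v hv
      obtain ⟨hvr, -⟩ := Finset.mem_erase.mp hv
      obtain ⟨a, ha⟩ := exists_inArc ht (hs v hvr) hvr
      exact ⟨(a, v), ha, rfl⟩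
  rw [hbij, Finset.card_erase_of_mem (Finset.mem_univ r), Finset.card_univ]

lemma spt_card [Fintype V] {A T : Finset (V × V)} (h : IsDirSpanningTree A T) :
    T.card = Fintype.card V - 1 := by
  obtain ⟨-, r, ht, hs⟩ := h
  exact tree_card ht hs

/-- Key exchange step. -/
lemma step [Fintype V] {A T T' : Finset (V × V)} (h : IsDirSpanningTree A T)
    (h' : IsDirSpanningTree A T') (hne : T ≠ T') :
    ∃ e ∈ T' \ T, ∃ f ∈ T \ T', IsDirSpanningTree A (insert e (T.erase f)) := by
  obtain ⟨hTA, r, ht, hsp⟩ := h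
  obtain ⟨hTA', r', ht', hsp'⟩ := h'
  by_cases hrr : r = r'
  · -- same root case
    subst hrr
    have hcard : T.card = T'.card := by
      rw [tree_card ht hsp, tree_card ht' hsp']
    have hdne : (T' \ T).Nonempty := by
      rw [Finset.sdiff_nonempty]
      intro hsub
      exact hne (Finset.eq_of_subset_of_card_le hsub (le_of_eq hcard)).symm
    obtain ⟨e₀, he₀⟩ := hdne
    have he₀T' : e₀ ∈ T' := (Finset.mem_sdiff.mp he₀).1
    have R : ∀ x, Relation.ReflTransGen (arcRel T') r x →
        Relation.ReflTransGen (arcRel (T' ∩ T)) r x ∨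
        ∃ g ∈ T' \ T, Relation.ReflTransGen (arcRel (T' ∩ T)) r g.1 := by
      intro x hx
      induction hx with
      | refl => exact Or.inl .refl
      | @tail w x hrw hwx ih =>
        rcases ih with hl | hr
        · by_cases hm : (w, x) ∈ T
          · exact Or.inl (hl.tail (show (w, x) ∈ T' ∩ T from Finset.mem_inter.mpr ⟨hwx, hm⟩))
          · exact Or.inr ⟨(w, x), Finset.mem_sdiff.mpr ⟨hwx, hm⟩, hl⟩
        · exact Or.inr hr
    have hkey : ∃ g ∈ T' \ T, Relation.ReflTransGen (arcRel (T' ∩ T)) r g.1 := by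
      have hreach : Relation.ReflTransGen (arcRel T') r e₀.1 :=
        ht'.2.2 e₀.1 (mem_arcVerts_fst (a := e₀.1) (b := e₀.2) he₀T')
      rcases R _ hreach with hl | hr
      · exact ⟨e₀, he₀, hl⟩
      · exact hr
    obtain ⟨⟨u, v⟩, heTT, hπ⟩ := hkey
    have heT' : (u, v) ∈ T' := (Finset.mem_sdiff.mp heTT).1
    have heT : (u, v) ∉ T := (Finset.mem_sdiff.mp heTT).2
    have hvr : v ≠ r := fun hh => no_arc_into ht'.1 (hh ▸ heT')
    have hvT : v ∈ arcVerts T := hsp v hvr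
    obtain ⟨w, hwv⟩ := exists_inArc ht hvT hvr
    have hfT' : (w, v) ∉ T' := by
      intro hmem
      obtain rfl := inArc_unique ht' hmem heT'
      exact heT hwv
    set T₁ := insert (u, v) (T.erase (w, v)) with hT₁
    have hsubT₁ : T.erase (w, v) ⊆ T₁ := Finset.subset_insert _ _
    have hπ' : Relation.ReflTransGen (arcRel T₁) r u := by
      refine Relation.ReflTransGen.mono ?_ _ _ hπ
      intro a b hab
      have h1 := Finset.mem_inter.mp hab
      have hne2 : (a, b) ≠ (w, v) := fun hh => hfT' (hh ▸ h1.1)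
      exact hsubT₁ (Finset.mem_erase.mpr ⟨hne2, h1.2⟩)
    have claim : ∀ x, Relation.ReflTransGen (arcRel T) r x →
        Relation.ReflTransGen (arcRel T₁) r x := by
      intro x hx
      induction hx with
      | refl => exact .refl
      | @tail w' x hrw' hw'x ih =>
        by_cases heq : (w', x) = (w, v)
        · have hxv : x = v := congrArg Prod.snd heq
          subst hxv
          exact hπ'.tail (Finset.mem_insert_self _ _)
        · exact ih.tail (hsubT₁ (Finset.mem_erase.mpr ⟨heq, hw'x⟩))
    have hd0 : inDeg T₁ r = 0 := by
      rw [inDeg, Finset.card_eq_zero, Finset.filter_eq_empty_iff]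
      rintro ⟨g1, g2⟩ hg rfl
      rcases Finset.mem_insert.mp hg with hh | hh
      · exact hvr (congrArg Prod.snd hh).symm
      · exact no_arc_into ht.1 (Finset.mem_of_mem_erase hh)
    have hdv : inDeg T₁ v = 1 := by
      rw [inDeg]
      have hfi : T₁.filter (fun e => e.2 = v) = {(u, v)} := by
        ext ⟨g1, g2⟩
        simp only [Finset.mem_filter, Finset.mem_singleton, Finset.mem_insert,
          Finset.mem_erase, hT₁]
        constructor
        · rintro ⟨hh | ⟨hne2, hgT⟩, rfl⟩
          · exact hh
          · exact absurd (inArc_unique ht hgT hwv) (fun hh => hne2 (by rw [hh]))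
        · rintro hh
          injection hh with hh1 hh2
          subst hh1; subst hh2
          exact ⟨Or.inl rfl, rfl⟩
      rw [hfi, Finset.card_singleton]
    have hdx : ∀ x, x ≠ v → inDeg T₁ x = inDeg T x := by
      intro x hxv
      unfold inDeg
      congr 1
      ext ⟨g1, g2⟩
      simp only [Finset.mem_filter, Finset.mem_insert, Finset.mem_erase, hT₁]
      constructor
      · rintro ⟨hh | ⟨-, hgT⟩, rfl⟩
        · injection hh with hh1 hh2; exact absurd hh2 hxv
        · exact ⟨hgT, rfl⟩
      · rintro ⟨hgT, rfl⟩
        exact ⟨Or.inr ⟨fun hh => hxv (congrArg Prod.snd hh), hgT⟩, rfl⟩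
    have hAV : ∀ x ∈ arcVerts T₁, x = u ∨ x = v ∨ x ∈ arcVerts T := by
      intro x hx
      obtain ⟨g, hg, hcase⟩ := arcVerts_cases hx
      rcases Finset.mem_insert.mp hg with rfl | hg'
      · rcases hcase with rfl | rfl
        · exact Or.inl rfl
        · exact Or.inr (Or.inl rfl)
      · have hgT := Finset.mem_of_mem_erase hg'
        rcases hcase with rfl | rfl
        · exact Or.inr (Or.inr (mem_arcVerts_fst (a := g.1) (b := g.2) hgT))
        · exact Or.inr (Or.inr (mem_arcVerts_snd (a := g.1) (b := g.2) hgT))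
    refine ⟨(u, v), Finset.mem_sdiff.mpr ⟨heT', heT⟩, (w, v),
      Finset.mem_sdiff.mpr ⟨hwv, hfT'⟩, ?_, r, ⟨hd0, ?_, ?_⟩, ?_⟩
    · refine Finset.insert_subset_iff.mpr ⟨hTA' heT', ?_⟩
      exact (Finset.erase_subset _ _).trans hTA
    · intro x hx hxr
      by_cases hxv : x = v
      · subst hxv; exact hdv
      · rw [hdx x hxv]
        refine ht.2.1 x ?_ hxr
        rcases hAV x hx with rfl | rfl | hmem
        · exact hsp x hxr
        · exact absurd rfl hxv
        · exact hmem
    · intro x hx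
      rcases hAV x hx with rfl | rfl | hmem
      · exact hπ'
      · exact hπ'.tail (Finset.mem_insert_self _ _)
      · exact claim x (ht.2.2 x hmem)
    · intro x hxr
      by_cases hxv : x = v
      · subst hxv
        exact mem_arcVerts_snd (Finset.mem_insert_self _ _)
      · obtain ⟨c, hc⟩ := exists_inArc ht (hsp x hxr) hxr
        have hne2 : (c, x) ≠ (w, v) := fun hh => hxv (congrArg Prod.snd hh)
        exact mem_arcVerts_snd (hsubT₁ (Finset.mem_erase.mpr ⟨hne2, hc⟩))
  · -- different roots: move the root
    have hrAV : r ∈ arcVerts T' := hsp' r hrr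
    obtain ⟨u, hur⟩ := exists_inArc ht' hrAV hrr
    have heT : (u, r) ∉ T := fun hh => no_arc_into ht.1 hh
    have hureach : Relation.ReflTransGen (arcRel T) r u := by
      by_cases hu : u = r
      · subst hu; exact .refl
      · exact ht.2.2 u (hsp u hu)
    have P : ∀ x, Relation.ReflTransGen (arcRel T) r x →
        Relation.ReflTransGen (arcRel T') r x ∨
        ∃ f, f ∈ T \ T' ∧ Relation.ReflTransGen (arcRel (T.erase f)) f.2 x := by
      intro x hx
      induction hx with
      | refl => exact Or.inl .refl
      | @tail w x hrw hwx ih =>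
        rcases ih with hl | ⟨f, hf, hp⟩
        · by_cases hm : (w, x) ∈ T'
          · exact Or.inl (hl.tail hm)
          · exact Or.inr ⟨(w, x), Finset.mem_sdiff.mpr ⟨hwx, hm⟩, .refl⟩
        · by_cases heq : (w, x) = f
          · exact Or.inr ⟨f, hf, by rw [← heq]⟩
          · exact Or.inr ⟨f, hf, hp.tail (Finset.mem_erase.mpr ⟨heq, hwx⟩)⟩
    rcases P u hureach with hl | ⟨⟨a, b⟩, hfTT, hp⟩
    · exfalso
      have hcyc : Relation.TransGen (arcRel T') r r := Relation.TransGen.tail' hl hur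
      exact acyc ht' r (ht'.2.2 r hrAV) hcyc
    have hfT : (a, b) ∈ T := (Finset.mem_sdiff.mp hfTT).1
    have hfT' : (a, b) ∉ T' := (Finset.mem_sdiff.mp hfTT).2
    have hbr : b ≠ r := fun hh => no_arc_into ht.1 (hh ▸ hfT)
    set T₁ := insert (u, r) (T.erase (a, b)) with hT₁
    have hsubT₁ : T.erase (a, b) ⊆ T₁ := Finset.subset_insert _ _
    have hi : Relation.ReflTransGen (arcRel T₁) b r := by
      refine Relation.ReflTransGen.tail ?_ (Finset.mem_insert_self _ _)
      exact Relation.ReflTransGen.mono (fun x y hxy => hsubT₁ hxy) _ _ hp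
    have claim : ∀ x, Relation.ReflTransGen (arcRel T) r x →
        Relation.ReflTransGen (arcRel T₁) b x := by
      intro x hx
      induction hx with
      | refl => exact hi
      | @tail w x hrw hwx ih =>
        by_cases heq : (w, x) = (a, b)
        · have hxb : x = b := congrArg Prod.snd heq
          subst hxb
          exact .refl
        · exact ih.tail (hsubT₁ (Finset.mem_erase.mpr ⟨heq, hwx⟩))
    have hd0 : inDeg T₁ b = 0 := by
      rw [inDeg, Finset.card_eq_zero, Finset.filter_eq_empty_iff]
      rintro ⟨g1, g2⟩ hg rfl
      rcases Finset.mem_insert.mp hg with hh | hh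
      · exact hbr (congrArg Prod.snd hh)
      · refine (Finset.mem_erase.mp hh).1 ?_
        rw [inArc_unique ht (Finset.mem_of_mem_erase hh) hfT]
    have hdr : inDeg T₁ r = 1 := by
      rw [inDeg]
      have hfi : T₁.filter (fun e => e.2 = r) = {(u, r)} := by
        ext ⟨g1, g2⟩
        simp only [hT₁, Finset.mem_filter, Finset.mem_insert, Finset.mem_erase,
          Finset.mem_singleton]
        constructor
        · rintro ⟨hh | ⟨hne2, hgT⟩, rfl⟩
          · exact hh
          · exact absurd hgT (fun hh2 => no_arc_into ht.1 hh2)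
        · rintro hh
          injection hh with hh1 hh2
          subst hh1; subst hh2
          exact ⟨Or.inl rfl, rfl⟩
      rw [hfi, Finset.card_singleton]
    have hdx : ∀ x, x ≠ b → x ≠ r → inDeg T₁ x = inDeg T x := by
      intro x hxb hxr
      unfold inDeg
      congr 1
      ext ⟨g1, g2⟩
      simp only [hT₁, Finset.mem_filter, Finset.mem_insert, Finset.mem_erase]
      constructor
      · rintro ⟨hh | ⟨-, hgT⟩, rfl⟩
        · injection hh with hh1 hh2; exact absurd hh2 hxr
        · exact ⟨hgT, rfl⟩
      · rintro ⟨hgT, rfl⟩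
        exact ⟨Or.inr ⟨fun hh => hxb (congrArg Prod.snd hh), hgT⟩, rfl⟩
    have hAV : ∀ x ∈ arcVerts T₁, x = u ∨ x = r ∨ x ∈ arcVerts T := by
      intro x hx
      obtain ⟨g, hg, hcase⟩ := arcVerts_cases hx
      rcases Finset.mem_insert.mp hg with rfl | hg'
      · rcases hcase with rfl | rfl
        · exact Or.inl rfl
        · exact Or.inr (Or.inl rfl)
      · have hgT := Finset.mem_of_mem_erase hg'
        rcases hcase with rfl | rfl
        · exact Or.inr (Or.inr (mem_arcVerts_fst (a := g.1) (b := g.2) hgT))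
        · exact Or.inr (Or.inr (mem_arcVerts_snd (a := g.1) (b := g.2) hgT))
    refine ⟨(u, r), Finset.mem_sdiff.mpr ⟨hur, heT⟩, (a, b), hfTT, ?_, b, ⟨hd0, ?_, ?_⟩, ?_⟩
    · refine Finset.insert_subset_iff.mpr ⟨hTA' hur, ?_⟩
      exact (Finset.erase_subset _ _).trans hTA
    · intro x hx hxb
      by_cases hxr : x = r
      · subst hxr; exact hdr
      · rw [hdx x hxb hxr]
        refine ht.2.1 x ?_ hxr
        rcases hAV x hx with rfl | rfl | hmem
        · exact hsp x hxr
        · exact absurd rfl hxr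
        · exact hmem
    · intro x hx
      rcases hAV x hx with rfl | rfl | hmem
      · exact claim x hureach
      · exact hi
      · exact claim x (ht.2.2 x hmem)
    · intro x hxb
      by_cases hxr : x = r
      · subst hxr
        exact mem_arcVerts_snd (Finset.mem_insert_self _ _)
      · obtain ⟨c, hc⟩ := exists_inArc ht (hsp x hxr) hxr
        have hne2 : (c, x) ≠ (a, b) := fun hh => hxb (congrArg Prod.snd hh)
        exact mem_arcVerts_snd (hsubT₁ (Finset.mem_erase.mpr ⟨hne2, hc⟩))

lemma sdiff_insert_erase₁ {T : Finset (V × V)} {e f : V × V} (he : e ∉ T) (hf : f ∈ T) :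
    T \ insert e (T.erase f) = {f} := by
  have hfe : f ≠ e := fun hh => he (hh ▸ hf)
  ext x
  simp only [Finset.mem_sdiff, Finset.mem_insert, Finset.mem_erase, Finset.mem_singleton,
    not_or, not_and]
  constructor
  · rintro ⟨hxT, -, hxf⟩
    by_contra hne
    exact (hxf hne) hxT
  · rintro rfl
    exact ⟨hf, hfe, fun hnf => absurd rfl hnf⟩
lemma sdiff_insert_erase₂ {T : Finset (V × V)} {e f : V × V} (he : e ∉ T) (hf : f ∈ T) :
    insert e (T.erase f) \ T = {e} := by
  ext x
  simp only [Finset.mem_sdiff, Finset.mem_insert, Finset.mem_erase, Finset.mem_singleton]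
  constructor
  · rintro ⟨hh | ⟨-, hxT⟩, hnT⟩
    · exact hh
    · exact absurd hxT hnT
  · rintro rfl
    exact ⟨Or.inl rfl, he⟩

lemma sdiff_insert_erase₃ {T Tg : Finset (V × V)} {e f : V × V} (heg : e ∈ Tg) :
    insert e (T.erase f) \ Tg = (T \ Tg).erase f := by
  ext x
  simp only [Finset.mem_sdiff, Finset.mem_insert, Finset.mem_erase]
  constructor
  · rintro ⟨hh | ⟨hxf, hxT⟩, hng⟩
    · exact absurd (hh ▸ heg) hng
    · exact ⟨hxf, hxT, hng⟩
  · rintro ⟨hxf, hxT, hng⟩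
    exact ⟨Or.inr ⟨hxf, hxT⟩, hng⟩

lemma main_aux [Fintype V] (A Tg : Finset (V × V)) (hg : IsDirSpanningTree A Tg) :
    ∀ n (T : Finset (V × V)), IsDirSpanningTree A T → (T \ Tg).card = n →
    ∃ f : ℕ → Finset (V × V), f 0 = T ∧ f n = Tg ∧
      (∀ i ≤ n, IsDirSpanningTree A (f i)) ∧
      ∀ i < n, (f i \ f (i + 1)).card = 1 ∧ (f (i + 1) \ f i).card = 1 := by
  intro n
  induction n with
  | zero =>
    intro T hT hcard
    have hsub : T ⊆ Tg := by
      rw [← Finset.sdiff_eq_empty_iff_subset]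
      exact Finset.card_eq_zero.mp hcard
    have hEq : T = Tg := Finset.eq_of_subset_of_card_le hsub
      (le_of_eq ((spt_card hg).trans (spt_card hT).symm))
    subst hEq
    exact ⟨fun _ => T, rfl, rfl, fun i _ => hT, fun i hi => absurd hi (Nat.not_lt_zero i)⟩
  | succ n ih =>
    intro T hT hcard
    have hne : T ≠ Tg := by
      intro hh
      subst hh
      simp at hcard
    obtain ⟨e, heTT, f₀, hfTT, hT₁⟩ := step hT hg hne
    have heg : e ∈ Tg := (Finset.mem_sdiff.mp heTT).1
    have heT : e ∉ T := (Finset.mem_sdiff.mp heTT).2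
    have hf₀T : f₀ ∈ T := (Finset.mem_sdiff.mp hfTT).1
    have hcard₁ : (insert e (T.erase f₀) \ Tg).card = n := by
      rw [sdiff_insert_erase₃ heg, Finset.card_erase_of_mem hfTT, hcard]
      omega
    obtain ⟨g, hg0, hgn, hgsp, hgd⟩ := ih (insert e (T.erase f₀)) hT₁ hcard₁
    refine ⟨fun i => match i with | 0 => T | (j + 1) => g j, rfl, hgn, ?_, ?_⟩
    · intro i hi
      match i with
      | 0 => exact hT
      | (j + 1) => exact hgsp j (Nat.lt_succ_iff.mp hi)
    · intro i hi
      match i with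
      | 0 =>
        show (T \ g 0).card = 1 ∧ (g 0 \ T).card = 1
        rw [hg0, sdiff_insert_erase₁ heT hf₀T, sdiff_insert_erase₂ heT hf₀T]
        exact ⟨Finset.card_singleton _, Finset.card_singleton _⟩
      | (j + 1) => exact hgd j (Nat.succ_lt_succ_iff.mp hi)

end DirTreeAux

/-- Between any two directed spanning trees of a finite digraph there is a
reconfiguration sequence of directed spanning trees of length exactly
`|A(T^s) \ A(T^g)|` (which is the minimum possible length). -/
theorem stmt1 {V : Type*} [Fintype V] [DecidableEq V] (A Ts Tg : Finset (V × V))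
    (hs : IsDirSpanningTree A Ts) (hg : IsDirSpanningTree A Tg) :
    ∃ f : ℕ → Finset (V × V),
      f 0 = Ts ∧ f ((Ts \ Tg).card) = Tg ∧
      (∀ i ≤ (Ts \ Tg).card, IsDirSpanningTree A (f i)) ∧
      (∀ i < (Ts \ Tg).card, (f i \ f (i + 1)).card = 1 ∧ (f (i + 1) \ f i).card = 1) := by
  exact DirTreeAux.main_aux A Tg hg ((Ts \ Tg).card) Ts hs rfl
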